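/- If a holomorphic triple T = (E₁, E₂, 0) with Φ = 0 is τ-semistable, then τ = μ(E₁), and moreover every holomorphic subbundle E₁' ⊆ E₁ satisfies μ(E₁') ≤ μ(E₁) (i.e. E₁ is semistable) and every holomorphic subbundle E₂' ⊆ E₂ satisfies μ(E₂') ≤ μ(E₂) (i.e. E₂ is semistable). -/
import Mathlib


open CategoryTheory CategoryTheory.Limits

noncomputable section

/-- Slope `d/r` of a bundle of degree `d` and rank `r`. -/
def bslope (d : ℤ) (r : ℕ) : ℝ := (d : ℝ) / (r : ℝ)

/-- The quantity `θ_τ(T')` for a subtriple with ranks `r1', r2'` and degrees `d1', d2'`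
of a triple with ranks `r1, r2` and degrees `d1, d2`. -/
def thetaTau (τ : ℝ) (r1 r2 : ℕ) (d1 d2 : ℤ) (r1' r2' : ℕ) (d1' d2' : ℤ) : ℝ :=
  (bslope (d1' + d2') (r1' + r2') - τ) -
    ((r2' : ℝ) / (r2 : ℝ)) * (((r1 : ℝ) + (r2 : ℝ)) / ((r1' : ℝ) + (r2' : ℝ))) *
      (bslope (d1 + d2) (r1 + r2) - τ)

universe v u

variable {C : Type u} [Category.{v} C] [Abelian C]

/-- `(E1', E2')` is a subtriple of `(E1, E2, Φ)` : `Φ` maps `E2'` into `E1'`. -/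
def IsSubtriple {E1 E2 : C} (Φ : E2 ⟶ E1) (E1' : Subobject E1) (E2' : Subobject E2) : Prop :=
  E1'.Factors (E2'.arrow ≫ Φ)

/-- `θ_τ` of a subtriple, expressed through rank and degree functions. -/
def theta (rank : C → ℕ) (deg : C → ℤ) (E1 E2 : C) (τ : ℝ)
    (E1' : Subobject E1) (E2' : Subobject E2) : ℝ :=
  thetaTau τ (rank E1) (rank E2) (deg E1) (deg E2)
    (rank (E1' : C)) (rank (E2' : C)) (deg (E1' : C)) (deg (E2' : C))

/-- τ-stability of the holomorphic triple `(E1, E2, Φ)`. -/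
def TStable (rank : C → ℕ) (deg : C → ℤ) (E1 E2 : C) (Φ : E2 ⟶ E1) (τ : ℝ) : Prop :=
  ∀ (E1' : Subobject E1) (E2' : Subobject E2), IsSubtriple Φ E1' E2' →
    ¬(E1' = ⊥ ∧ E2' = ⊥) → ¬(E1' = ⊤ ∧ E2' = ⊤) →
    theta rank deg E1 E2 τ E1' E2' < 0

/-- τ-semistability of the holomorphic triple `(E1, E2, Φ)`. -/
def TSemistable (rank : C → ℕ) (deg : C → ℤ) (E1 E2 : C) (Φ : E2 ⟶ E1) (τ : ℝ) : Prop :=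
  ∀ (E1' : Subobject E1) (E2' : Subobject E2), IsSubtriple Φ E1' E2' →
    ¬(E1' = ⊥ ∧ E2' = ⊥) → ¬(E1' = ⊤ ∧ E2' = ⊤) →
    theta rank deg E1 E2 τ E1' E2' ≤ 0

/-- Slope stability for a single bundle. -/
def BStable (rank : C → ℕ) (deg : C → ℤ) (B : C) : Prop :=
  ∀ X : Subobject B, X ≠ ⊥ → X ≠ ⊤ →
    bslope (deg (X : C)) (rank (X : C)) < bslope (deg B) (rank B)

/-- Slope semistability for a single bundle. -/
def BSemistable (rank : C → ℕ) (deg : C → ℤ) (B : C) : Prop :=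
  ∀ X : Subobject B, X ≠ ⊥ →
    bslope (deg (X : C)) (rank (X : C)) ≤ bslope (deg B) (rank B)


private lemma arithB {t d1 d2 r1 r2 : ℝ} (h1 : 0 < r1) (h2 : 0 < r2)
    (h : d2 / r2 - t - r2 / r2 * ((r1 + r2) / r2) * ((d1 + d2) / (r1 + r2) - t) ≤ 0) :
    t ≤ d1 / r1 := by
  have h12 : (0:ℝ) < r1 + r2 := by linarith
  have e : (r2 * (r1 + r2)) *
      (d2 / r2 - t - r2 / r2 * ((r1 + r2) / r2) * ((d1 + d2) / (r1 + r2) - t)) =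
      (r1 + r2) * (t * r1 - d1) := by
    field_simp
    ring
  have h' : (r1 + r2) * (t * r1 - d1) ≤ 0 := by
    rw [← e]
    exact mul_nonpos_of_nonneg_of_nonpos (by positivity) h
  rw [le_div_iff₀ h1]
  nlinarith [h']

private lemma arithC {d1 d2 d2' r1 r2 r2' : ℝ} (h1 : 0 < r1) (h2 : 0 < r2) (h2' : 0 < r2')
    (h : d2' / r2' - d1 / r1 -
      r2' / r2 * ((r1 + r2) / r2') * ((d1 + d2) / (r1 + r2) - d1 / r1) ≤ 0) :
    d2' / r2' ≤ d2 / r2 := by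
  have h12 : (0:ℝ) < r1 + r2 := by linarith
  have e : (r1 * r2 * r2' * (r1 + r2)) *
      (d2' / r2' - d1 / r1 -
        r2' / r2 * ((r1 + r2) / r2') * ((d1 + d2) / (r1 + r2) - d1 / r1)) =
      (r1 * (r1 + r2)) * (d2' * r2 - d2 * r2') := by
    field_simp
    ring
  have h' : (r1 * (r1 + r2)) * (d2' * r2 - d2 * r2') ≤ 0 := by
    rw [← e]
    exact mul_nonpos_of_nonneg_of_nonpos (by positivity) h
  rw [div_le_div_iff₀ h2' h2]
  nlinarith [h', mul_pos h1 h12]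

/-- a triple with `Φ = 0` is `τ`-semistable only if `τ = μ(E₁)` and both
bundles are semistable. -/
theorem tSemistable_of_phi_zero
    (rank : C → ℕ) (deg : C → ℤ) (E1 E2 : C) (τ : ℝ)
    (hrank_bot : ∀ (B : C) (X : Subobject B), X = ⊥ ↔ rank (X : C) = 0)
    (hrank_top : ∀ B : C, rank ((⊤ : Subobject B) : C) = rank B)
    (hdeg_top : ∀ B : C, deg ((⊤ : Subobject B) : C) = deg B)
    (hrank_add : ∀ (B : C) (X : Subobject B), rank B = rank (X : C) + rank (cokernel X.arrow))
    (hdeg_add : ∀ (B : C) (X : Subobject B), deg B = deg (X : C) + deg (cokernel X.arrow))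
    (hiso : ∀ A B : C, Nonempty (A ≅ B) → rank A = rank B ∧ deg A = deg B)
    (h1 : 0 < rank E1) (h2 : 0 < rank E2)
    (hss : TSemistable rank deg E1 E2 (0 : E2 ⟶ E1) τ) :
    τ = bslope (deg E1) (rank E1) ∧
      BSemistable rank deg E1 ∧ BSemistable rank deg E2 := by
  have hsub : ∀ (A : Subobject E1) (B : Subobject E2), IsSubtriple (0 : E2 ⟶ E1) A B := by
    intro A B
    unfold IsSubtriple
    rw [Limits.comp_zero]
    exact Subobject.factors_zero
  have hrb : ∀ B : C, rank ((⊥ : Subobject B) : C) = 0 := fun B => (hrank_bot B ⊥).mp rfl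
  have hdb : ∀ B : C, deg ((⊥ : Subobject B) : C) = 0 := by
    intro B
    have hiso' : Nonempty (cokernel (⊥ : Subobject B).arrow ≅ B) :=
      ⟨cokernelIsoOfEq (Subobject.bot_arrow) ≪≫ cokernelZeroIsoTarget⟩
    have h := hdeg_add B ⊥
    have := (hiso _ _ hiso').2
    omega
  have hbt1 : (⊥ : Subobject E1) ≠ ⊤ := by
    intro h
    have := (hrank_bot E1 ⊤).mp h.symm
    rw [hrank_top] at this
    omega
  have hbt2 : (⊥ : Subobject E2) ≠ ⊤ := by
    intro h
    have := (hrank_bot E2 ⊤).mp h.symm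
    rw [hrank_top] at this
    omega
  have hr1p : (0:ℝ) < (rank E1 : ℝ) := by exact_mod_cast h1
  have hr2p : (0:ℝ) < (rank E2 : ℝ) := by exact_mod_cast h2
  have hA := hss ⊤ ⊥ (hsub _ _) (fun h => hbt1 h.1.symm) (fun h => hbt2 h.2)
  have hA' : (deg E1 : ℝ) / (rank E1 : ℝ) - τ ≤ 0 := by
    unfold theta thetaTau bslope at hA
    rw [hrank_top, hdeg_top, hrb, hdb] at hA
    simpa using hA
  have hB := hss ⊥ ⊤ (hsub _ _) (fun h => hbt2 h.2.symm) (fun h => hbt1 h.1)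
  have hB' : τ ≤ (deg E1 : ℝ) / (rank E1 : ℝ) := by
    unfold theta thetaTau bslope at hB
    rw [hrank_top, hdeg_top, hrb, hdb] at hB
    push_cast at hB
    simp only [zero_add] at hB
    exact arithB hr1p hr2p hB
  have htau : τ = bslope (deg E1) (rank E1) := by
    unfold bslope
    linarith
  refine ⟨htau, ?_, ?_⟩
  · intro X hX
    have hC := hss X ⊥ (hsub _ _) (fun h => hX h.1) (fun h => hbt2 h.2)
    unfold theta thetaTau bslope at hC
    rw [hrb, hdb] at hC
    push_cast at hC
    simp only [add_zero, zero_div, zero_mul, mul_zero, sub_zero] at hC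
    unfold bslope
    push_cast
    rw [htau] at hC
    unfold bslope at hC
    linarith
  · intro X hX
    have hXr : 0 < rank (X : C) := by
      rcases Nat.eq_zero_or_pos (rank (X : C)) with h | h
      · exact absurd ((hrank_bot E2 X).mpr h) hX
      · exact h
    have hr2'p : (0:ℝ) < (rank (X : C) : ℝ) := by exact_mod_cast hXr
    have hC := hss ⊥ X (hsub _ _) (fun h => hX h.2) (fun h => hbt1 h.1)
    unfold theta thetaTau bslope at hC
    rw [hrb, hdb, htau] at hC
    unfold bslope at hC
    push_cast at hC
    simp only [zero_add] at hC
    unfold bslope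
    push_cast
    exact arithC hr1p hr2p hr2'p hC
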